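/- Let f: ℝ⁴ → ℝ be continuous, compactly supported, and radially symmetric (f(x) = f₀(|x|)). For any η > 0, ∫_{x₁ > η} f(x)/(x₁ − η)^{1/2} dx = η^{−1/2} ∫_η^∞ f₀(ρ) h(ρ/η) ρ³ dρ, where h(r) = (4π/r²) ∫₁^r √((r² − z²)/(z − 1)) dz. -/

import Mathlib

open Real MeasureTheory Set

noncomputable def hker (r : ℝ) : ℝ :=
  (4 * Real.pi / r^2) * ∫ z in (1:ℝ)..r, Real.sqrt ((r^2 - z^2)/(z - 1))

lemma ball3 : (volume (Metric.ball (0 : EuclideanSpace ℝ (Fin 3)) 1)).toReal = 4 * π / 3 := by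
  rw [EuclideanSpace.volume_ball]
  have h32 : ((Fintype.card (Fin 3) : ℝ) / 2 + 1) = (3/2 + 1 : ℝ) := by norm_num
  rw [h32]
  have : Real.Gamma (3/2 + 1) = 3/4 * Real.sqrt π := by
    rw [Real.Gamma_add_one (by norm_num)]
    rw [show (3/2 : ℝ) = 1/2 + 1 by norm_num, Real.Gamma_add_one (by norm_num),
      Real.Gamma_one_half_eq]
    ring
  rw [this]
  simp only [Fintype.card_fin]
  rw [ENNReal.toReal_mul, ENNReal.toReal_pow, ENNReal.toReal_ofReal (by norm_num),
    ENNReal.toReal_ofReal]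
  · rw [one_pow, one_mul,
      show Real.sqrt π ^ 3 = π * Real.sqrt π by rw [pow_succ, sq_sqrt pi_pos.le],
      mul_div_assoc, div_mul_eq_div_div_swap, div_self (Real.sqrt_ne_zero'.mpr pi_pos)]
    ring
  · positivity

lemma radial3 (g1 : ℝ → ℝ) :
    ∫ w : EuclideanSpace ℝ (Fin 3), g1 ‖w‖ = (4 * π) * ∫ s in Ioi (0:ℝ), s ^ 2 * g1 s := by
  rw [integral_fun_norm_addHaar volume g1, measureReal_def, ball3]
  have hd : Module.finrank ℝ (EuclideanSpace ℝ (Fin 3)) = 3 := by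
    simp [finrank_euclideanSpace_fin]
  rw [hd]
  simp only [smul_eq_mul, nsmul_eq_mul]
  norm_num
  ring

lemma subst3 (g : ℝ → ℝ) (t : ℝ) (ht : 0 ≤ t) :
    ∫ s in Ioi (0:ℝ), s^2 * g (Real.sqrt (t^2+s^2))
      = ∫ ρ in Ioi t, (ρ * Real.sqrt (ρ^2-t^2)) * g ρ := by
  have himg : (fun ρ => Real.sqrt (ρ^2 - t^2)) '' (Ioi t) = Ioi (0:ℝ) := by
    ext s
    constructor
    · rintro ⟨ρ, hρ, rfl⟩
      have h1 : t^2 < ρ^2 := by nlinarith [mem_Ioi.mp hρ]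
      exact mem_Ioi.mpr (Real.sqrt_pos.mpr (by linarith))
    · intro hs
      refine ⟨Real.sqrt (t^2 + s^2), ?_, ?_⟩
      · have : t^2 < t^2 + s^2 := by nlinarith [mem_Ioi.mp hs]
        have := Real.sqrt_lt_sqrt (sq_nonneg t) this
        rwa [Real.sqrt_sq ht] at this
      · show Real.sqrt (Real.sqrt (t^2+s^2)^2 - t^2) = s
        rw [Real.sq_sqrt (by positivity)]
        rw [show t^2 + s^2 - t^2 = s^2 by ring, Real.sqrt_sq (le_of_lt (mem_Ioi.mp hs))]
  have hderiv : ∀ ρ ∈ Ioi t, HasDerivWithinAt (fun ρ => Real.sqrt (ρ^2 - t^2))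
      (ρ / Real.sqrt (ρ^2 - t^2)) (Ioi t) ρ := by
    intro ρ hρ
    have h1 : t^2 < ρ^2 := by nlinarith [mem_Ioi.mp hρ, ht.trans_lt (mem_Ioi.mp hρ)]
    have hne : ρ^2 - t^2 ≠ 0 := by linarith
    have h2 : HasDerivAt (fun ρ : ℝ => ρ^2 - t^2) (2*ρ) ρ := by
      simpa using (hasDerivAt_pow 2 ρ).sub_const (t^2)
    have h3 := (Real.hasDerivAt_sqrt hne).comp ρ h2
    have : 1 / (2 * Real.sqrt (ρ^2 - t^2)) * (2*ρ) = ρ / Real.sqrt (ρ^2 - t^2) := by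
      rw [div_mul_eq_mul_div, one_mul, mul_comm (2:ℝ) (Real.sqrt _), ← div_div,
        mul_div_assoc, mul_comm, mul_div_assoc, div_self (two_ne_zero), mul_one]
    rw [this] at h3
    exact h3.hasDerivWithinAt
  have hinj : InjOn (fun ρ => Real.sqrt (ρ^2 - t^2)) (Ioi t) := by
    intro a ha b hb hab
    simp only at hab
    have ha' : t < a := ha
    have hb' : t < b := hb
    have h1 : a^2 - t^2 = b^2 - t^2 := by
      have := congrArg (· ^ 2) hab
      simpa [Real.sq_sqrt, sub_nonneg, (by nlinarith : t^2 ≤ a^2), (by nlinarith : t^2 ≤ b^2)]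
        using this
    nlinarith [ht.trans_lt ha', ht.trans_lt hb']
  rw [← himg, integral_image_eq_integral_abs_deriv_smul measurableSet_Ioi hderiv hinj]
  apply setIntegral_congr_fun measurableSet_Ioi
  intro ρ hρ
  have hρt : t < ρ := hρ
  have hρ0 : (0:ℝ) ≤ ρ := ht.trans hρt.le
  have h1 : 0 < ρ^2 - t^2 := by nlinarith
  set u := Real.sqrt (ρ^2 - t^2) with hu
  have hsq : u^2 = ρ^2 - t^2 := Real.sq_sqrt h1.le
  have hs0 : u ≠ 0 := by rw [hu]; positivity
  simp only [smul_eq_mul]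
  rw [hsq, show t^2 + (ρ^2 - t^2) = ρ^2 by ring, Real.sqrt_sq hρ0,
    abs_of_nonneg (by positivity : (0:ℝ) ≤ ρ / u), ← hsq]
  field_simp
  rw [hu, Real.sqrt_sq (Real.sqrt_nonneg _)]
  ring

lemma inner_t (η ρ : ℝ) (hη : 0 < η) (hρ : η < ρ) :
    (∫ t in Ioo η ρ, Real.sqrt (ρ^2 - t^2) / Real.sqrt (t - η))
      = η * Real.sqrt η * ∫ z in (1:ℝ)..(ρ/η), Real.sqrt (((ρ/η)^2 - z^2)/(z-1)) := by
  set r := ρ / η with hr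
  have hρr : ρ = η * r := by rw [hr]; field_simp
  have hr1 : 1 < r := (one_lt_div hη).mpr hρ
  have key : (∫ z in (1:ℝ)..r, Real.sqrt (ρ^2 - (η*z)^2) / Real.sqrt (η*z - η))
      = η⁻¹ • ∫ t in (η*1 : ℝ)..(η*r), Real.sqrt (ρ^2 - t^2) / Real.sqrt (t - η) :=
    intervalIntegral.integral_comp_mul_left
      (fun t => Real.sqrt (ρ^2 - t^2) / Real.sqrt (t - η)) hη.ne'
  rw [mul_one, ← hρr] at key
  have h2 : (∫ t in (η:ℝ)..ρ, Real.sqrt (ρ^2 - t^2) / Real.sqrt (t - η))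
      = ∫ t in Ioo η ρ, Real.sqrt (ρ^2 - t^2) / Real.sqrt (t - η) := by
    rw [intervalIntegral.integral_of_le hρ.le, MeasureTheory.integral_Ioc_eq_integral_Ioo]
  rw [← h2]
  have h3 : (∫ z in (1:ℝ)..r, Real.sqrt (ρ^2 - (η*z)^2) / Real.sqrt (η*z - η))
      = ∫ z in (1:ℝ)..r, Real.sqrt η * Real.sqrt ((r^2 - z^2)/(z-1)) := by
    apply intervalIntegral.integral_congr
    intro z hz
    rw [Set.uIcc_of_le hr1.le] at hz
    obtain ⟨hz1, hzr⟩ := hz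
    show Real.sqrt (ρ^2 - (η*z)^2) / Real.sqrt (η*z - η)
      = Real.sqrt η * Real.sqrt ((r^2 - z^2)/(z-1))
    have e1 : ρ^2 - (η*z)^2 = η^2 * (r^2 - z^2) := by rw [hρr]; ring
    have e2 : η*z - η = η * (z - 1) := by ring
    rw [e1, e2, Real.sqrt_mul (sq_nonneg η), Real.sqrt_sq hη.le, Real.sqrt_mul hη.le]
    rcases eq_or_lt_of_le hz1 with h | h
    · rw [← h]; simp
    · have hz1' : 0 < z - 1 := by linarith
      have hrz : 0 ≤ r^2 - z^2 := by nlinarith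
      rw [Real.sqrt_div hrz]
      rw [show η * Real.sqrt (r^2-z^2) / (Real.sqrt η * Real.sqrt (z-1))
          = (η / Real.sqrt η) * (Real.sqrt (r^2-z^2) / Real.sqrt (z-1)) by ring, Real.div_sqrt]
  rw [h3] at key
  rw [intervalIntegral.integral_const_mul] at key
  have : (∫ t in (η:ℝ)..ρ, Real.sqrt (ρ^2 - t^2) / Real.sqrt (t - η))
      = η * (Real.sqrt η * ∫ z in (1:ℝ)..r, Real.sqrt ((r^2 - z^2)/(z-1))) := by
    rw [key, smul_eq_mul]; field_simp
  rw [this]; ring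

/-- integrability of `(√(ت-η))⁻¹` on `Ioc η b`. -/
lemma integrableOn_inv_sqrt_sub (η b : ℝ) :
    IntegrableOn (fun t => (Real.sqrt (t - η))⁻¹) (Ioc η b) volume := by
  have h0 : IntervalIntegrable (fun x : ℝ => x ^ (-(1:ℝ)/2)) volume 0 (b - η) :=
    intervalIntegral.intervalIntegrable_rpow' (by norm_num)
  have h1 : IntervalIntegrable (fun x : ℝ => (x - η) ^ (-(1:ℝ)/2)) volume η b := by
    have := h0.comp_sub_right η
    simpa using this
  rcases le_or_gt η b with hb | hb
  · have h2 : IntegrableOn (fun x : ℝ => (x - η) ^ (-(1:ℝ)/2)) (Ioc η b) volume :=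
      (intervalIntegrable_iff_integrableOn_Ioc_of_le hb).mp h1
    apply h2.congr_fun ?_ measurableSet_Ioc
    intro t ht
    have h3 : 0 < t - η := by linarith [ht.1]
    show (t - η) ^ (-(1:ℝ)/2) = (Real.sqrt (t - η))⁻¹
    rw [show (-(1:ℝ)/2) = -(1/2 : ℝ) by norm_num, Real.rpow_neg h3.le,
      ← Real.sqrt_eq_rpow]
  · rw [Ioc_eq_empty (by linarith)]
    exact integrableOn_empty


noncomputable def Phi4 : (ℝ × (Fin 3 → ℝ)) ≃ᵐ EuclideanSpace ℝ (Fin 4) :=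
  (MeasurableEquiv.piFinSuccAbove (fun _ : Fin 4 => ℝ) 0).symm.trans
    ((MeasurableEquiv.toLp 2 (Fin 4 → ℝ)).symm).symm

lemma Phi4_mp : MeasurePreserving Phi4
    ((volume : Measure ℝ).prod (volume : Measure (Fin 3 → ℝ))) volume :=
  ((EuclideanSpace.volume_preserving_symm_measurableEquiv_toLp (Fin 4)).symm).comp
    ((volume_preserving_piFinSuccAbove (fun _ : Fin 4 => ℝ) 0).symm)

lemma Phi4_fst (t : ℝ) (y : Fin 3 → ℝ) : (Phi4 (t, y)) 0 = t := by
  simp [Phi4, MeasurableEquiv.piFinSuccAbove, MeasurableEquiv.toLp_apply]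

lemma Phi4_norm (t : ℝ) (y : Fin 3 → ℝ) :
    ‖Phi4 (t, y)‖ = Real.sqrt (t^2 + ∑ j, (y j)^2) := by
  rw [EuclideanSpace.norm_eq]
  congr 1
  simp [Phi4, MeasurableEquiv.piFinSuccAbove, MeasurableEquiv.toLp_apply, Fin.sum_univ_succ]


set_option maxHeartbeats 2000000 in
/-- Half-space integral of a radial function in `ℝ⁴` expressed through the
kernel `hker` via hyperspherical coordinates. -/
theorem halfspace_integral_radial (η : ℝ) (hη : 0 < η)
    (f : EuclideanSpace ℝ (Fin 4) → ℝ) (f₀ : ℝ → ℝ)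
    (hf : Continuous f) (hsupp : HasCompactSupport f)
    (hrad : ∀ x, f x = f₀ ‖x‖) :
    (∫ x in {x : EuclideanSpace ℝ (Fin 4) | η < x 0},
        f x / Real.sqrt (x 0 - η))
    = η ^ (-(1:ℝ)/2) * ∫ ρ in Set.Ioi η, f₀ ρ * hker (ρ/η) * ρ^3 := by
  -- bound and radius for f
  obtain ⟨C, hC⟩ := hsupp.exists_bound_of_continuous hf
  have hC0 : 0 ≤ C := le_trans (norm_nonneg (f 0)) (hC 0)
  obtain ⟨R0, hR0⟩ := hsupp.isBounded.subset_closedBall 0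
  set R' : ℝ := max R0 0 + (η + 1) with hR'def
  have hηR' : η < R' := by
    have : (0:ℝ) ≤ max R0 0 := le_max_right _ _
    simp only [hR'def]; linarith
  have hfzero : ∀ x : EuclideanSpace ℝ (Fin 4), R' ≤ ‖x‖ → f x = 0 := by
    intro x hx
    apply image_eq_zero_of_notMem_tsupport
    intro hmem
    have := hR0 hmem
    rw [Metric.mem_closedBall, dist_zero_right] at this
    have h1 : R0 ≤ max R0 0 := le_max_left _ _
    simp only [hR'def] at hx
    linarith
  -- the radial profile g
  set g : ℝ → ℝ := fun s => f (s • EuclideanSpace.single (0 : Fin 4) (1:ℝ)) with hgdef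
  have hnorms : ∀ s : ℝ, ‖s • EuclideanSpace.single (0 : Fin 4) (1:ℝ)‖ = |s| := by
    intro s; rw [norm_smul, EuclideanSpace.norm_single]; simp
  have hg : Continuous g := hf.comp (continuous_id.smul continuous_const)
  have hgf : ∀ x : EuclideanSpace ℝ (Fin 4), f x = g ‖x‖ := by
    intro x
    rw [hrad x]
    simp only [hgdef]
    rw [hrad (‖x‖ • EuclideanSpace.single (0 : Fin 4) (1:ℝ)), hnorms, abs_of_nonneg (norm_nonneg x)]
  have hgR : ∀ s : ℝ, R' ≤ s → g s = 0 := by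
    intro s hs
    apply hfzero
    rw [hnorms]
    exact hs.trans (le_abs_self s)
  have hgC : ∀ s : ℝ, |g s| ≤ C := by
    intro s
    have := hC (s • EuclideanSpace.single (0 : Fin 4) (1:ℝ))
    rwa [Real.norm_eq_abs] at this
  have hf₀ : ∀ s : ℝ, 0 ≤ s → f₀ s = g s := by
    intro s hs
    simp only [hgdef]
    rw [hrad, hnorms, abs_of_nonneg hs]
  -- measurability of the half-space
  have hc0 : Continuous fun x : EuclideanSpace ℝ (Fin 4) => x 0 := by
    simpa using (EuclideanSpace.proj (0 : Fin 4)).continuous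
  have hmeas_half : MeasurableSet {x : EuclideanSpace ℝ (Fin 4) | η < x 0} :=
    (isOpen_lt continuous_const hc0).measurableSet
  -- step 1 : transport to ℝ × ℝ³
  set H : ℝ × (Fin 3 → ℝ) → ℝ := fun p =>
    Set.indicator {p : ℝ × (Fin 3 → ℝ) | η < p.1}
      (fun p => g (Real.sqrt (p.1^2 + ∑ j, (p.2 j)^2)) / Real.sqrt (p.1 - η)) p with hHdef
  have step1 : (∫ x in {x : EuclideanSpace ℝ (Fin 4) | η < x 0},
      f x / Real.sqrt (x 0 - η))
      = ∫ p, H p ∂((volume : Measure ℝ).prod (volume : Measure (Fin 3 → ℝ))) := by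
    rw [← integral_indicator hmeas_half]
    rw [← Phi4_mp.integral_comp Phi4.measurableEmbedding]
    congr 1
    funext p
    rcases p with ⟨t, y⟩
    simp only [hHdef, Set.indicator_apply, Set.mem_setOf_eq, Phi4_fst]
    by_cases h : η < t
    · rw [if_pos h, if_pos h, hgf, Phi4_norm]
    · rw [if_neg h, if_neg h]
  -- integrability of H
  have hSymeas : MeasurableSet {y : Fin 3 → ℝ | Real.sqrt (∑ j, (y j)^2) ≤ R'} := by
    have hc : Continuous fun y : Fin 3 → ℝ => Real.sqrt (∑ j, (y j)^2) :=
      Real.continuous_sqrt.comp (continuous_finset_sum _ fun j _ => (continuous_apply j).pow 2)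
    exact (isClosed_le hc continuous_const).measurableSet
  have hSyvol : volume {y : Fin 3 → ℝ | Real.sqrt (∑ j, (y j)^2) ≤ R'} < ⊤ := by
    have hsub : {y : Fin 3 → ℝ | Real.sqrt (∑ j, (y j)^2) ≤ R'}
        ⊆ Set.pi Set.univ (fun _ : Fin 3 => Icc (-R') R') := by
      intro y hy
      intro j _
      have h1 : (y j)^2 ≤ ∑ i, (y i)^2 :=
        Finset.single_le_sum (f := fun i => (y i)^2) (fun i _ => sq_nonneg _) (Finset.mem_univ j)
      have h2 : |y j| ≤ Real.sqrt (∑ i, (y i)^2) := by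
        rw [← Real.sqrt_sq_eq_abs]
        exact Real.sqrt_le_sqrt h1
      have := h2.trans hy
      rw [abs_le] at this
      exact ⟨this.1, this.2⟩
    calc volume {y : Fin 3 → ℝ | Real.sqrt (∑ j, (y j)^2) ≤ R'}
        ≤ volume (Set.pi Set.univ (fun _ : Fin 3 => Icc (-R') R')) := measure_mono hsub
      _ = ∏ _j : Fin 3, volume (Icc (-R') R') := volume_pi_pi _
      _ < ⊤ := by
          simp only [Real.volume_Icc, Finset.prod_const]
          exact ENNReal.pow_lt_top ENNReal.ofReal_lt_top
  have hsum_nn : ∀ y : Fin 3 → ℝ, (0:ℝ) ≤ ∑ j, (y j)^2 := fun y =>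
    Finset.sum_nonneg fun j _ => sq_nonneg _
  have HInt : Integrable H ((volume : Measure ℝ).prod (volume : Measure (Fin 3 → ℝ))) := by
    set Sy := {y : Fin 3 → ℝ | Real.sqrt (∑ j, (y j)^2) ≤ R'} with hSydef
    set B : ℝ × (Fin 3 → ℝ) → ℝ := fun p =>
      (Set.indicator (Ioc η R') (fun t => C * (Real.sqrt (t - η))⁻¹) p.1)
        * (Set.indicator Sy (fun _ => (1:ℝ)) p.2) with hBdef
    have hBint : Integrable B ((volume : Measure ℝ).prod volume) := by
      apply Integrable.mul_prod
      · rw [integrable_indicator_iff measurableSet_Ioc]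
        exact (integrableOn_inv_sqrt_sub η R').const_mul C
      · rw [integrable_indicator_iff hSymeas]
        exact (integrableOn_const_iff).mpr (Or.inr hSyvol)
    have hHmeas : AEStronglyMeasurable H ((volume : Measure ℝ).prod volume) := by
      have m1 : Measurable fun p : ℝ × (Fin 3 → ℝ) =>
          g (Real.sqrt (p.1^2 + ∑ j, (p.2 j)^2)) :=
        (hg.comp (Real.continuous_sqrt.comp
          (((continuous_fst.pow 2)).add
            (continuous_finset_sum _ fun j _ =>
              ((continuous_apply j).comp continuous_snd).pow 2)))).measurable
      have m2 : Measurable fun p : ℝ × (Fin 3 → ℝ) => Real.sqrt (p.1 - η) :=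
        (Real.continuous_sqrt.comp (continuous_fst.sub continuous_const)).measurable
      have hset : MeasurableSet {p : ℝ × (Fin 3 → ℝ) | η < p.1} :=
        measurableSet_lt measurable_const measurable_fst
      exact ((m1.div m2).indicator hset).aestronglyMeasurable
    apply Integrable.mono' hBint hHmeas
    apply ae_of_all
    rintro ⟨t, y⟩
    have hBnn1 : (0:ℝ) ≤ Set.indicator (Ioc η R') (fun t => C * (Real.sqrt (t - η))⁻¹) t :=
      Set.indicator_nonneg (fun s _ => by positivity) t
    have hBnn2 : (0:ℝ) ≤ Set.indicator Sy (fun _ => (1:ℝ)) y :=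
      Set.indicator_nonneg (fun _ _ => zero_le_one) y
    have hBnn : (0:ℝ) ≤ B (t, y) := mul_nonneg hBnn1 hBnn2
    by_cases h : η < t
    · have hval : H (t, y) = g (Real.sqrt (t^2 + ∑ j, (y j)^2)) / Real.sqrt (t - η) := by
        simp only [hHdef, Set.indicator_apply, Set.mem_setOf_eq, if_pos h]
      set A := Real.sqrt (t^2 + ∑ j, (y j)^2) with hAdef
      have ht0 : (0:ℝ) < t := hη.trans h
      have hAt : t ≤ A := by
        rw [hAdef]
        exact (Real.le_sqrt ht0.le (add_nonneg (sq_nonneg t) (hsum_nn y))).mpr (by linarith [hsum_nn y])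
      have hAy : Real.sqrt (∑ j, (y j)^2) ≤ A := by
        rw [hAdef]
        exact Real.sqrt_le_sqrt (by nlinarith [sq_nonneg t])
      by_cases h1 : t ≤ R'
      · by_cases h2 : y ∈ Sy
        · have hB : B (t, y) = C * (Real.sqrt (t - η))⁻¹ := by
            rw [hBdef]
            simp only
            have hmem : t ∈ Ioc η R' := ⟨h, h1⟩
            rw [Set.indicator_of_mem hmem, Set.indicator_of_mem h2, mul_one]
          rw [hval, hB, Real.norm_eq_abs, abs_div, abs_of_nonneg (Real.sqrt_nonneg _),
            div_eq_mul_inv]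
          exact mul_le_mul_of_nonneg_right (hgC A) (by positivity)
        · have hgA : g A = 0 := by
            apply hgR
            have : R' < Real.sqrt (∑ j, (y j)^2) := by
              by_contra hcon
              exact h2 (by simpa [hSydef] using not_lt.mp hcon)
            linarith [hAy]
          rw [hval, hgA, zero_div, norm_zero]
          exact hBnn
      · have hgA : g A = 0 := hgR A (by linarith [hAt, not_le.mp h1])
        rw [hval, hgA, zero_div, norm_zero]
        exact hBnn
    · have hval : H (t, y) = 0 := by
        simp only [hHdef, Set.indicator_apply, Set.mem_setOf_eq, if_neg h]
      rw [hval, norm_zero]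
      exact hBnn
  -- step 2: Fubini on ℝ × ℝ³
  have step2 : (∫ p, H p ∂((volume : Measure ℝ).prod (volume : Measure (Fin 3 → ℝ))))
      = ∫ t, (∫ y, H (t, y)) ∂(volume : Measure ℝ) := integral_prod _ HInt
  -- step 3: peel off the indicator
  have step3 : (∫ t, (∫ y, H (t, y)) ∂(volume : Measure ℝ))
      = ∫ t in Ioi η,
          (∫ y : Fin 3 → ℝ, g (Real.sqrt (t^2 + ∑ j, (y j)^2))) / Real.sqrt (t - η) := by
    rw [← integral_indicator measurableSet_Ioi]
    congr 1
    funext t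
    by_cases h : η < t
    · rw [Set.indicator_of_mem (Set.mem_Ioi.mpr h)]
      have hfun : (fun y : Fin 3 → ℝ => H (t, y))
          = fun y => g (Real.sqrt (t^2 + ∑ j, (y j)^2)) / Real.sqrt (t - η) := by
        funext y
        simp only [hHdef, Set.indicator_apply, Set.mem_setOf_eq, if_pos h]
      rw [hfun, integral_div]
    · rw [Set.indicator_of_notMem (by simpa using h)]
      have hfun : (fun y : Fin 3 → ℝ => H (t, y)) = fun _ => (0:ℝ) := by
        funext y
        simp only [hHdef, Set.indicator_apply, Set.mem_setOf_eq, if_neg h]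
      rw [hfun, integral_zero]
  -- step 4: spherical coordinates in ℝ³ plus substitution
  have step4 : ∀ t : ℝ, η < t →
      (∫ y : Fin 3 → ℝ, g (Real.sqrt (t^2 + ∑ j, (y j)^2)))
        = (4 * π) * ∫ ρ in Ioi t, (ρ * Real.sqrt (ρ^2 - t^2)) * g ρ := by
    intro t ht
    have e3 := EuclideanSpace.volume_preserving_symm_measurableEquiv_toLp (Fin 3)
    rw [← e3.integral_comp ((MeasurableEquiv.toLp 2 (Fin 3 → ℝ)).symm).measurableEmbedding]
    have hcoord : ∀ (w : EuclideanSpace ℝ (Fin 3)),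
        g (Real.sqrt (t^2 + ∑ j, (((MeasurableEquiv.toLp 2 (Fin 3 → ℝ)).symm) w j)^2))
          = (fun u => g (Real.sqrt (t^2 + u^2))) ‖w‖ := by
      intro w
      have hs : (∑ j, (((MeasurableEquiv.toLp 2 (Fin 3 → ℝ)).symm) w j)^2) = ‖w‖^2 := by
        have hco : ∀ j, ((MeasurableEquiv.toLp 2 (Fin 3 → ℝ)).symm) w j = w j := fun j => by
          simp [MeasurableEquiv.toLp_symm_apply]
        simp_rw [hco]
        rw [EuclideanSpace.norm_eq,
          Real.sq_sqrt (Finset.sum_nonneg fun j _ => by positivity)]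
        simp [sq_abs]
      simp only
      rw [hs]
    simp_rw [hcoord]
    rw [radial3 (fun u => g (Real.sqrt (t^2 + u^2)))]
    congr 1
    exact subst3 g t (by linarith)
  set F : ℝ → ℝ → ℝ :=
    fun t ρ => (ρ * Real.sqrt (ρ^2 - t^2)) * g ρ / Real.sqrt (t - η) with hFdef
  -- step 5: push the 1/√(t-η) inside
  have step5 : (∫ t in Ioi η,
        (∫ y : Fin 3 → ℝ, g (Real.sqrt (t^2 + ∑ j, (y j)^2))) / Real.sqrt (t - η))
      = (4*π) * ∫ t in Ioi η, ∫ ρ in Ioi t, F t ρ := by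
    rw [← integral_const_mul]
    apply setIntegral_congr_fun measurableSet_Ioi
    intro t ht
    dsimp only
    rw [step4 t ht, mul_div_assoc, ← integral_div]
  set W : ℝ × ℝ → ℝ := fun p =>
    Set.indicator {p : ℝ × ℝ | η < p.1 ∧ p.1 < p.2} (fun p => F p.1 p.2) p with hWdef
  have hWsetmeas : MeasurableSet {p : ℝ × ℝ | η < p.1 ∧ p.1 < p.2} :=
    (measurableSet_lt measurable_const measurable_fst).inter
      (measurableSet_lt measurable_fst measurable_snd)
  have WInt : Integrable W ((volume : Measure ℝ).prod (volume : Measure ℝ)) := by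
    set B2 : ℝ × ℝ → ℝ := fun p =>
      (Set.indicator (Ioc η R') (fun t => (R' * (R' * C)) * (Real.sqrt (t - η))⁻¹) p.1)
        * (Set.indicator (Ioc η R') (fun _ => (1:ℝ)) p.2) with hB2def
    have hB2int : Integrable B2 ((volume : Measure ℝ).prod volume) := by
      apply Integrable.mul_prod
      · rw [integrable_indicator_iff measurableSet_Ioc]
        exact (integrableOn_inv_sqrt_sub η R').const_mul _
      · rw [integrable_indicator_iff measurableSet_Ioc]
        exact (integrableOn_const_iff).mpr (Or.inr (by rw [Real.volume_Ioc]; exact ENNReal.ofReal_lt_top))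
    have hWmeas : AEStronglyMeasurable W ((volume : Measure ℝ).prod volume) := by
      have m1 : Measurable fun p : ℝ × ℝ => (p.2 * Real.sqrt (p.2^2 - p.1^2)) * g p.2 :=
        ((continuous_snd.mul (Real.continuous_sqrt.comp
          ((continuous_snd.pow 2).sub (continuous_fst.pow 2)))).mul
            (hg.comp continuous_snd)).measurable
      have m2 : Measurable fun p : ℝ × ℝ => Real.sqrt (p.1 - η) :=
        (Real.continuous_sqrt.comp (continuous_fst.sub continuous_const)).measurable
      exact ((m1.div m2).indicator hWsetmeas).aestronglyMeasurable
    apply Integrable.mono' hB2int hWmeas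
    apply ae_of_all
    rintro ⟨t, ρ⟩
    have hBnn1 : (0:ℝ) ≤ Set.indicator (Ioc η R')
        (fun t => (R' * (R' * C)) * (Real.sqrt (t - η))⁻¹) t :=
      Set.indicator_nonneg (fun s _ => by positivity) t
    have hBnn2 : (0:ℝ) ≤ Set.indicator (Ioc η R') (fun _ => (1:ℝ)) ρ :=
      Set.indicator_nonneg (fun _ _ => zero_le_one) ρ
    have hBnn : (0:ℝ) ≤ B2 (t, ρ) := mul_nonneg hBnn1 hBnn2
    by_cases h : η < t ∧ t < ρ
    · have hval : W (t, ρ) = F t ρ := by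
        simp only [hWdef, Set.indicator_apply, Set.mem_setOf_eq, if_pos h]
      obtain ⟨h1, h2⟩ := h
      have ht0 : (0:ℝ) < t := hη.trans h1
      have hρ0 : (0:ℝ) < ρ := ht0.trans h2
      by_cases h3 : ρ ≤ R'
      · have hmem1 : t ∈ Ioc η R' := ⟨h1, by linarith⟩
        have hmem2 : ρ ∈ Ioc η R' := ⟨h1.trans h2, h3⟩
        have hB : B2 (t, ρ) = (R' * (R' * C)) * (Real.sqrt (t - η))⁻¹ := by
          simp only [hB2def]
          rw [Set.indicator_of_mem hmem1, Set.indicator_of_mem hmem2, mul_one]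
        rw [hval, hB, hFdef]
        simp only
        rw [Real.norm_eq_abs, abs_div, abs_of_nonneg (Real.sqrt_nonneg _), div_eq_mul_inv]
        apply mul_le_mul_of_nonneg_right _ (by positivity)
        rw [abs_mul, abs_mul]
        have hsle : Real.sqrt (ρ^2 - t^2) ≤ R' := by
          have h4 : ρ^2 - t^2 ≤ R'^2 := by nlinarith
          calc Real.sqrt (ρ^2 - t^2) ≤ Real.sqrt (R'^2) := Real.sqrt_le_sqrt h4
            _ = R' := Real.sqrt_sq (by linarith)
        have hρle : |ρ| ≤ R' := by rw [abs_of_nonneg hρ0.le]; exact h3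
        have h5 : |Real.sqrt (ρ^2 - t^2)| = Real.sqrt (ρ^2 - t^2) :=
          abs_of_nonneg (Real.sqrt_nonneg _)
        rw [h5]
        have hR'0 : (0:ℝ) ≤ R' := by linarith
        calc |ρ| * Real.sqrt (ρ^2 - t^2) * |g ρ|
            ≤ R' * R' * C := by
              apply mul_le_mul (mul_le_mul hρle hsle (Real.sqrt_nonneg _) hR'0)
                (hgC ρ) (abs_nonneg _) (by positivity)
          _ = R' * (R' * C) := by ring
      · have hgρ : g ρ = 0 := hgR ρ (by linarith)
        rw [hval, hFdef]
        simp only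
        rw [hgρ, mul_zero, zero_div, norm_zero]
        exact hBnn
    · have hval : W (t, ρ) = 0 := by
        simp only [hWdef, Set.indicator_apply, Set.mem_setOf_eq, if_neg h]
      rw [hval, norm_zero]
      exact hBnn
  have swap : (∫ t, (∫ ρ, W (t, ρ))) = ∫ ρ, (∫ t, W (t, ρ)) :=
    integral_integral_swap (by exact WInt)
  have marg1 : (∫ t in Ioi η, ∫ ρ in Ioi t, F t ρ) = ∫ t, (∫ ρ, W (t, ρ)) := by
    rw [← integral_indicator measurableSet_Ioi]
    congr 1
    funext t
    by_cases h : η < t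
    · rw [Set.indicator_of_mem (Set.mem_Ioi.mpr h)]
      have hfun : (fun ρ => W (t, ρ)) = (Ioi t).indicator (fun ρ => F t ρ) := by
        funext ρ
        simp only [hWdef, Set.indicator_apply, Set.mem_setOf_eq, Set.mem_Ioi]
        by_cases h2 : t < ρ
        · rw [if_pos ⟨h, h2⟩, if_pos h2]
        · rw [if_neg (fun hc => h2 hc.2), if_neg h2]
      rw [hfun, integral_indicator measurableSet_Ioi]
    · rw [Set.indicator_of_notMem (by simpa using h)]
      have hfun : (fun ρ => W (t, ρ)) = fun _ => (0:ℝ) := by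
        funext ρ
        simp only [hWdef, Set.indicator_apply, Set.mem_setOf_eq]
        rw [if_neg (fun hc => h hc.1)]
      rw [hfun, integral_zero]
  have marg2 : (∫ ρ, (∫ t, W (t, ρ))) = ∫ ρ in Ioi η, ∫ t in Ioo η ρ, F t ρ := by
    rw [← integral_indicator measurableSet_Ioi]
    congr 1
    funext ρ
    have hsec : (fun t => W (t, ρ)) = (Ioo η ρ).indicator (fun t => F t ρ) := by
      funext t
      simp only [hWdef, Set.indicator_apply, Set.mem_setOf_eq, Set.mem_Ioo]
    rw [hsec, integral_indicator measurableSet_Ioo]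
    by_cases h : η < ρ
    · rw [Set.indicator_of_mem (Set.mem_Ioi.mpr h)]
    · rw [Set.indicator_of_notMem (by simpa using h), Ioo_eq_empty (by simpa using h)]
      simp
  -- step 7 : per-ρ inner integral
  have step7 : (∫ ρ in Ioi η, ∫ t in Ioo η ρ, F t ρ)
      = ∫ ρ in Ioi η, (ρ * g ρ) *
          (η * Real.sqrt η * ∫ z in (1:ℝ)..(ρ/η), Real.sqrt (((ρ/η)^2 - z^2)/(z-1))) := by
    apply setIntegral_congr_fun measurableSet_Ioi
    intro ρ hρ
    dsimp only
    have hρη : η < ρ := hρ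
    have hpull : (∫ t in Ioo η ρ, F t ρ)
        = (ρ * g ρ) * ∫ t in Ioo η ρ, Real.sqrt (ρ^2 - t^2) / Real.sqrt (t - η) := by
      rw [← integral_const_mul]
      apply setIntegral_congr_fun measurableSet_Ioo
      intro t ht
      simp only [hFdef]
      ring
    rw [hpull, inner_t η ρ hη hρη]
  -- assemble everything
  rw [step1, step2, step3, step5, marg1, swap, marg2, step7]
  rw [← integral_const_mul, ← integral_const_mul]
  apply setIntegral_congr_fun measurableSet_Ioi
  intro ρ hρ
  dsimp only
  have hρη : η < ρ := hρ
  have hρ0 : (0:ℝ) < ρ := hη.trans hρη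
  rw [hf₀ ρ hρ0.le]
  have hrpow : η ^ (-(1:ℝ)/2) = (Real.sqrt η)⁻¹ := by
    rw [show (-(1:ℝ)/2) = -(1/2:ℝ) by norm_num, Real.rpow_neg hη.le, ← Real.sqrt_eq_rpow]
  rw [hrpow]
  simp only [hker]
  have hsqη : Real.sqrt η * Real.sqrt η = η := Real.mul_self_sqrt hη.le
  have hsqη0 : Real.sqrt η ≠ 0 := by positivity
  set I := ∫ z in (1:ℝ)..(ρ/η), Real.sqrt (((ρ/η)^2 - z^2)/(z-1)) with hIdef
  field_simp
  linear_combination (g ρ * I) * hsqη
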